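/- arXiv:1109.3322 — 2 statements merged into one kernel-verified Lean document; each statement's English description precedes it below -/
import Mathlib

section
/- Let s = (E,L) be a legal state, A a group of agents with |A| ≥ 3, and m_B an email. Then s ⊨ C_A m_B (with m_B interpreted as its defining formula) if and only if the following three conditions hold: (C1) Ag = S(m) ∪ R(m) ∪ B; (C2) for each i ∈ B there exists m'_{B'} ∈ E_A such that m' → i◁m is valid; (C3) there exists m'_{B'} ∈ E_A such that m' → m is valid. -/
/-- Messages: `send i l G` is a message with note `l` sent by `i` to group `G`;
`fwd i l m G` is the forward by `i` of message `m` with appended note `l`, sent to `G`. -/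
inductive Msg (Agent Note : Type) where
  | send : Agent → Note → Finset Agent → Msg Agent Note
  | fwd  : Agent → Note → Msg Agent Note → Finset Agent → Msg Agent Note
  deriving DecidableEq

namespace Msg
variable {Agent Note : Type}

/-- The sender of a message. -/
def sender : Msg Agent Note → Agent
  | send i _ _ => i
  | fwd i _ _ _ => i

/-- The group of regular recipients of a message. -/
def recip : Msg Agent Note → Finset Agent
  | send _ _ G => G
  | fwd _ _ _ G => G

/-- `S(m)`: the singleton set consisting of the sender. -/
def S (m : Msg Agent Note) : Finset Agent := {m.sender}

/-- Factual information `FI(m)` contained in a message. -/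
def FI : Msg Agent Note → Set Note
  | send _ l _ => {l}
  | fwd _ l m _ => FI m ∪ {l}

/-- Wellformedness: all recipient groups are nonempty. -/
def WF : Msg Agent Note → Prop
  | send _ _ G => G.Nonempty
  | fwd _ _ m G => G.Nonempty ∧ m.WF

/-- `PartOf m' m` : message `m'` is part of the message `m`. -/
inductive PartOf : Msg Agent Note → Msg Agent Note → Prop
  | base (i : Agent) (l : Note) (m : Msg Agent Note) (G : Finset Agent) :
      PartOf m (fwd i l m G)
  | step (i : Agent) (l : Note) (m m' : Msg Agent Note) (G : Finset Agent) :
      PartOf m' m → PartOf m' (fwd i l m G)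

end Msg

/-- An email `m_B`: a message together with a set of BCC recipients. -/
structure Email (Agent Note : Type) where
  msg : Msg Agent Note
  bcc : Finset Agent
  deriving DecidableEq

namespace Email
variable {Agent Note : Type} [DecidableEq Agent]

/-- All agents involved in the email: the sender, regular recipients and BCC recipients. -/
def agents (e : Email Agent Note) : Finset Agent := e.msg.S ∪ e.msg.recip ∪ e.bcc

/-- Wellformedness of an email: the message is wellformed and
`(S(m) ∪ R(m)) ∩ B = ∅`. -/
def WF (e : Email Agent Note) : Prop :=
  e.msg.WF ∧ (e.msg.S ∪ e.msg.recip) ∩ e.bcc = ∅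

/-- Indistinguishability of emails for agent `i`. -/
def sim (i : Agent) (e e' : Email Agent Note) : Prop :=
  e.msg = e'.msg ∧
    ((i ∈ e.msg.S ∧ e.bcc = e'.bcc) ∨ i ∈ e.msg.recip \ e.msg.S ∨ i ∈ e.bcc ∩ e'.bcc)

/-- The email `e` is shared by the group `A`. -/
def SharedBy (A : Finset Agent) (e : Email Agent Note) : Prop :=
  A ⊆ e.msg.S ∪ e.msg.recip ∨ ∃ j ∈ e.bcc, A ⊆ e.msg.S ∪ {j}

end Email

/-- A state: a finite set of emails together with the initial notes of each agent. -/
structure EState (Agent Note : Type) where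
  emails : Finset (Email Agent Note)
  notes : Agent → Set Note

namespace EState
variable {Agent Note : Type} [DecidableEq Agent]

/-- The basic requirements on a state: all its emails are wellformed and
it contains at most one email per message. -/
def WF (s : EState Agent Note) : Prop :=
  (∀ e ∈ s.emails, e.WF) ∧
  ∀ e ∈ s.emails, ∀ e' ∈ s.emails, e.msg = e'.msg → e = e'

/-- Legality of a state: there is a strict partial order on its emails
satisfying conditions L1, L2, L3. -/
def Legal (s : EState Agent Note) : Prop :=
  s.WF ∧
  ∃ r : Email Agent Note → Email Agent Note → Prop,
    (∀ e ∈ s.emails, ¬ r e e) ∧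
    (∀ e ∈ s.emails, ∀ e' ∈ s.emails, ∀ e'' ∈ s.emails, r e e' → r e' e'' → r e e'') ∧
    -- L1
    (∀ e ∈ s.emails, ∀ (i : Agent) (l : Note) (m : Msg Agent Note) (G : Finset Agent),
      e.msg = Msg.fwd i l m G →
      ∃ e' ∈ s.emails, e'.msg = m ∧ r e' e ∧ i ∈ m.S ∪ m.recip ∪ e'.bcc) ∧
    -- L2
    (∀ e ∈ s.emails, ∀ (i : Agent) (l : Note) (G : Finset Agent),
      e.msg = Msg.send i l G → l ∉ s.notes i →
      ∃ e' ∈ s.emails, r e' e ∧ i ∈ e'.msg.recip ∪ e'.bcc ∧ l ∈ e'.msg.FI) ∧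
    -- L3
    (∀ e ∈ s.emails, ∀ (i : Agent) (l : Note) (m : Msg Agent Note) (G : Finset Agent),
      e.msg = Msg.fwd i l m G → l ∉ s.notes i →
      ∃ e' ∈ s.emails, r e' e ∧ i ∈ e'.msg.recip ∪ e'.bcc ∧ l ∈ e'.msg.FI)

/-- Indistinguishability of states for agent `i`. -/
def sim (i : Agent) (s s' : EState Agent Note) : Prop :=
  s.notes i = s'.notes i ∧
  (∀ e ∈ s.emails, i ∈ e.agents → ∃ e' ∈ s'.emails, e.sim i e') ∧
  (∀ e' ∈ s'.emails, i ∈ e'.agents → ∃ e ∈ s.emails, e.sim i e')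

/-- `~_A`: the reflexive transitive closure of the union of the relations `~_i`, `i ∈ A`. -/
def simG (G : Finset Agent) : EState Agent Note → EState Agent Note → Prop :=
  Relation.ReflTransGen (fun t t' => ∃ i ∈ G, t.sim i t')

end EState

/-- Formulas of the epistemic language (with a trivially true formula `tt`
used to form finite conjunctions). -/
inductive Form (Agent Note : Type) where
  | tt   : Form Agent Note
  | msg  : Msg Agent Note → Form Agent Note
  | recv : Agent → Msg Agent Note → Form Agent Note
  | neg  : Form Agent Note → Form Agent Note
  | and  : Form Agent Note → Form Agent Note → Form Agent Note
  | ck   : Finset Agent → Form Agent Note → Form Agent Note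

namespace Form
variable {Agent Note : Type}

def imp (φ ψ : Form Agent Note) : Form Agent Note := neg (and φ (neg ψ))

def iff (φ ψ : Form Agent Note) : Form Agent Note := and (imp φ ψ) (imp ψ φ)

def bigAnd : List (Form Agent Note) → Form Agent Note
  | [] => tt
  | φ :: l => and φ (bigAnd l)

end Form

/-- Truth of a formula in a state. -/
def Sat {Agent Note : Type} [DecidableEq Agent] :
    EState Agent Note → Form Agent Note → Prop
  | _, .tt => True
  | s, .msg m => ∃ B, (⟨m, B⟩ : Email Agent Note) ∈ s.emails
  | s, .recv i m => ∃ B, (⟨m, B⟩ : Email Agent Note) ∈ s.emails ∧ i ∈ m.S ∪ m.recip ∪ B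
  | s, .neg φ => ¬ Sat s φ
  | s, .and φ ψ => Sat s φ ∧ Sat s ψ
  | s, .ck G φ => ∀ s', EState.Legal s' → EState.simG G s s' → Sat s' φ

/-- Validity: truth in all legal states. -/
def Valid {Agent Note : Type} [DecidableEq Agent] (φ : Form Agent Note) : Prop :=
  ∀ s : EState Agent Note, s.Legal → Sat s φ

/-- The formula `m_B` expressing that the message `m` was sent with exactly `B`
as the set of BCC recipients. -/
noncomputable def Email.form {Agent Note : Type} [DecidableEq Agent] [Fintype Agent]
    (e : Email Agent Note) : Form Agent Note :=
  .and (.msg e.msg)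
    (.and (Form.bigAnd (e.agents.toList.map fun i => .recv i e.msg))
      (Form.bigAnd ((e.agentsᶜ : Finset Agent).toList.map fun i => .neg (.recv i e.msg))))

/-- The epistemic information `EI(m)` contained in a message. -/
def Msg.EIF {Agent Note : Type} [DecidableEq Agent] : Msg Agent Note → Form Agent Note
  | .send i l G => .ck ({i} ∪ G) (.msg (.send i l G))
  | .fwd i l m G => .ck ({i} ∪ G) (.and (.msg (.fwd i l m G)) (EIF m))

/-- The epistemic information `EI(m_B)` contained in an email. -/
noncomputable def Email.EIF {Agent Note : Type} [DecidableEq Agent] [Fintype Agent]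
    (e : Email Agent Note) : Form Agent Note :=
  .and e.msg.EIF
    (.and (Form.bigAnd (e.bcc.toList.map fun i =>
        .ck (e.msg.S ∪ {i}) (.and e.msg.EIF (.recv i e.msg))))
      (.ck e.msg.S e.form))

/-- The information gain `IG(m_B, i)` of an agent from an email. -/
noncomputable def Email.IG {Agent Note : Type} [DecidableEq Agent] [Fintype Agent]
    (e : Email Agent Note) (i : Agent) : Form Agent Note :=
  if e.msg.sender = i then e.EIF
  else if i ∈ e.msg.recip then e.msg.EIF
  else .ck (e.msg.S ∪ {i}) (.and e.msg.EIF (.recv i e.msg))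

/-- The strict partial order `<` on emails: `e < e'` iff the messages differ and
`m' → m` is valid. -/
def emailLt {Agent Note : Type} [DecidableEq Agent] (e e' : Email Agent Note) : Prop :=
  e.msg ≠ e'.msg ∧ Valid (Form.imp (.msg e'.msg) (.msg e.msg))

/-- `E_A`: the set of emails of `E` shared by the group `A`. -/
noncomputable def sharedSet {Agent Note : Type} [DecidableEq Agent]
    (E : Finset (Email Agent Note)) (A : Finset Agent) : Finset (Email Agent Note) :=
  @Finset.filter _ (fun e => e.SharedBy A) (fun _ => Classical.propDecidable _) E

/-- The downward closure `E'_≤` of `E' ⊆ E` w.r.t. the order `<`. -/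
noncomputable def downClosure {Agent Note : Type} [DecidableEq Agent] [DecidableEq Note]
    (E E' : Finset (Email Agent Note)) : Finset (Email Agent Note) :=
  E' ∪ @Finset.filter _ (fun e => ∃ e' ∈ E', emailLt e e')
    (fun _ => Classical.propDecidable _) E

/-- The state `s \ m_B`: removing the email from the state while augmenting the
initial notes of its recipients with the factual information of its message. -/
def EState.remove {Agent Note : Type} [DecidableEq Agent] [DecidableEq Note]
    (s : EState Agent Note) (e : Email Agent Note) : EState Agent Note :=
  ⟨s.emails.erase e,
   fun i => if i ∈ e.msg.recip ∪ e.bcc then s.notes i ∪ e.msg.FI else s.notes i⟩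

/-- The state `s[m_{B ↦ C}]`: shrinking the BCC set of the email `e = m_B` to `C`,
augmenting the initial notes of the agents in `B \ C`. -/
def EState.shrink {Agent Note : Type} [DecidableEq Agent] [DecidableEq Note]
    (s : EState Agent Note) (e : Email Agent Note) (C : Finset Agent) : EState Agent Note :=
  ⟨insert ⟨e.msg, C⟩ (s.emails.erase e),
   fun i => if i ∈ e.bcc \ C then s.notes i ∪ e.msg.FI else s.notes i⟩

/-- A mailbox assigns to every agent a set of messages. -/
abbrev Mailbox (Agent Note : Type) := Agent → Set (Msg Agent Note)

/-- A configuration: a state together with a mailbox. -/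
abbrev Config (Agent Note : Type) := EState Agent Note × Mailbox Agent Note

/-- The conditions under which an email with the given message can be processed. -/
def CanProcess {Agent Note : Type} (L : Agent → Set Note) (σ : Mailbox Agent Note) :
    Msg Agent Note → Prop
  | .send i l _ => l ∈ L i ∨ ∃ m' ∈ σ i, l ∈ Msg.FI m'
  | .fwd i l m' _ => m' ∈ σ i ∧ (l ∈ L i ∨ ∃ m'' ∈ σ i, l ∈ Msg.FI m'')

/-- Delivery of an email: the message is added to the mailboxes of the sender,
the regular recipients and the BCC recipients. -/
def deliver {Agent Note : Type} [DecidableEq Agent] (σ : Mailbox Agent Note)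
    (e : Email Agent Note) : Mailbox Agent Note :=
  fun j => if j ∈ e.agents then σ j ∪ {e.msg} else σ j

/-- An atomic transition between configurations, processing one email. -/
def Step {Agent Note : Type} [DecidableEq Agent] [DecidableEq Note]
    (c c' : Config Agent Note) : Prop :=
  ∃ e ∈ c.1.emails, CanProcess c.1.notes c.2 e.msg ∧
    c'.1 = ⟨c.1.emails.erase e, c.1.notes⟩ ∧ c'.2 = deliver c.2 e

/-- The initial configuration: the state together with the empty mailbox. -/
def startConfig {Agent Note : Type} (s : EState Agent Note) : Config Agent Note :=
  (s, fun _ => ∅)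

/-- An email exchange starting in `s`: a maximal sequence of atomic transitions
starting in the configuration `⟨s, σ₀⟩`. -/
def IsExchange {Agent Note : Type} [DecidableEq Agent] [DecidableEq Note]
    (s : EState Agent Note) (cs : List (Config Agent Note)) : Prop :=
  List.Chain Step (startConfig s) cs ∧
  ∀ c', ¬ Step ((startConfig s :: cs).getLast (List.cons_ne_nil _ _)) c'

/-- An email exchange properly terminates if its last configuration has an
empty set of emails. -/
def ProperlyTerminates {Agent Note : Type} [DecidableEq Agent] [DecidableEq Note]
    (s : EState Agent Note) (cs : List (Config Agent Note)) : Prop :=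
  ((startConfig s :: cs).getLast (List.cons_ne_nil _ _)).1.emails = ∅

set_option linter.unusedSectionVars false
section AuxCK
variable {Agent Note : Type} [DecidableEq Agent]

/-- depth of a message, used to show a message differs from its forward -/
def msgDepth : Msg Agent Note → Nat
  | .send _ _ _ => 0
  | .fwd _ _ m _ => msgDepth m + 1

lemma msg_ne_fwd (i : Agent) (l : Note) (m : Msg Agent Note) (G : Finset Agent) :
    m ≠ Msg.fwd i l m G := by
  intro h
  have := congrArg msgDepth h
  simp [msgDepth] at this

lemma sat_imp {s : EState Agent Note} {φ ψ : Form Agent Note} :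
    Sat s (φ.imp ψ) ↔ (Sat s φ → Sat s ψ) := by
  simp only [Form.imp, Sat]; tauto

lemma valid_imp_self (m : Msg Agent Note) :
    Valid (Form.imp (.msg m) (.msg m)) := by
  intro t _; exact sat_imp.2 id

lemma valid_fwd_msg (i : Agent) (l : Note) (m : Msg Agent Note) (G : Finset Agent) :
    Valid (Form.imp (.msg (.fwd i l m G)) (.msg m)) := by
  intro t ht
  refine sat_imp.2 ?_
  rintro ⟨B, hB⟩
  obtain ⟨-, r, -, -, hL1, -, -⟩ := ht
  obtain ⟨e', he', hmsg, -, -⟩ := hL1 ⟨.fwd i l m G, B⟩ hB i l m G rfl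
  exact ⟨e'.bcc, by rwa [show (⟨m, e'.bcc⟩ : Email Agent Note) = e' from by rw [← hmsg]]⟩

lemma valid_fwd_recv (i : Agent) (l : Note) (m : Msg Agent Note) (G : Finset Agent) :
    Valid (Form.imp (.msg (.fwd i l m G)) (.recv i m)) := by
  intro t ht
  refine sat_imp.2 ?_
  rintro ⟨B, hB⟩
  obtain ⟨-, r, -, -, hL1, -, -⟩ := ht
  obtain ⟨e', he', hmsg, -, hi⟩ := hL1 ⟨.fwd i l m G, B⟩ hB i l m G rfl
  exact ⟨e'.bcc, by rwa [show (⟨m, e'.bcc⟩ : Email Agent Note) = e' from by rw [← hmsg]], hi⟩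

lemma mem_agents {e : Email Agent Note} {i : Agent} :
    i ∈ e.agents ↔ i ∈ e.msg.S ∨ i ∈ e.msg.recip ∨ i ∈ e.bcc := by
  simp [Email.agents, Finset.mem_union, or_assoc]

lemma Email.sim_refl' {i : Agent} {e : Email Agent Note} (h : i ∈ e.agents) :
    e.sim i e := by
  refine ⟨rfl, ?_⟩
  rcases mem_agents.1 h with h' | h' | h'
  · exact Or.inl ⟨h', rfl⟩
  · by_cases hS : i ∈ e.msg.S
    · exact Or.inl ⟨hS, rfl⟩
    · exact Or.inr (Or.inl (Finset.mem_sdiff.2 ⟨h', hS⟩))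
  · exact Or.inr (Or.inr (Finset.mem_inter.2 ⟨h', h'⟩))

lemma shared_of_card {A : Finset Agent} (hA : 3 ≤ A.card) {e : Email Agent Note}
    (h : e.SharedBy A) : A ⊆ e.msg.S ∪ e.msg.recip := by
  rcases h with h | ⟨j, _, hsub⟩
  · exact h
  · exfalso
    have : A.card ≤ (e.msg.S ∪ {j}).card := Finset.card_le_card hsub
    have h2 : (e.msg.S ∪ {j}).card ≤ 2 := by
      refine le_trans (Finset.card_union_le _ _) ?_
      simp [Msg.S]
    omega

lemma not_shared_exists {A : Finset Agent} {e : Email Agent Note}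
    (h : ¬ e.SharedBy A) : ∃ i ∈ A, i ∉ e.msg.S ∪ e.msg.recip := by
  by_contra hc
  push_neg at hc
  exact h (Or.inl fun x hx => hc x hx)

lemma exists_third {A : Finset Agent} (hA : 3 ≤ A.card) (a b : Agent) :
    ∃ k ∈ A, k ≠ a ∧ k ≠ b := by
  have : (A \ {a, b}).Nonempty := by
    rw [← Finset.card_pos]
    have h1 := Finset.le_card_sdiff ({a, b} : Finset Agent) A
    have h2 : ({a, b} : Finset Agent).card ≤ 2 := Finset.card_insert_le _ _ |>.trans (by simp)
    omega
  obtain ⟨k, hk⟩ := this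
  rw [Finset.mem_sdiff, Finset.mem_insert, Finset.mem_singleton] at hk
  exact ⟨k, hk.1, fun h => hk.2 (Or.inl h), fun h => hk.2 (Or.inr h)⟩

lemma sat_bigAnd {s : EState Agent Note} {L : List (Form Agent Note)} :
    Sat s (Form.bigAnd L) ↔ ∀ φ ∈ L, Sat s φ := by
  induction L with
  | nil => simp [Form.bigAnd, Sat]
  | cons φ l ih => simp [Form.bigAnd, Sat, ih]

lemma form_iff [Fintype Agent] {s : EState Agent Note} (hs : s.Legal) {e : Email Agent Note}
    (he : e.WF) : Sat s e.form ↔ e ∈ s.emails := by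
  obtain ⟨⟨hwf, huniq⟩, -⟩ := hs
  constructor
  · rintro ⟨⟨B₀, hB₀⟩, h2, h3⟩
    rw [sat_bigAnd] at h2 h3
    have hrecv : ∀ i ∈ e.agents, i ∈ e.msg.S ∪ e.msg.recip ∪ B₀ := by
      intro i hi
      obtain ⟨B₁, hB₁, hiB₁⟩ := h2 (.recv i e.msg)
        (by simp only [List.mem_map, Finset.mem_toList]; exact ⟨i, hi, rfl⟩)
      have heq := huniq _ hB₁ _ hB₀ rfl
      rw [Email.mk.injEq] at heq
      rwa [heq.2] at hiB₁
    have hnot : ∀ i, i ∉ e.agents → i ∉ e.msg.S ∪ e.msg.recip ∪ B₀ := by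
      intro i hi hcon
      exact h3 (.neg (.recv i e.msg))
        (by simp only [List.mem_map, Finset.mem_toList]
            exact ⟨i, Finset.mem_compl.2 hi, rfl⟩) ⟨B₀, hB₀, hcon⟩
    have hdisj := hwf _ hB₀
    have hB : B₀ = e.bcc := by
      ext x
      constructor
      · intro hx
        have hxSR : x ∉ e.msg.S ∪ e.msg.recip := by
          intro hcon
          have : x ∈ (e.msg.S ∪ e.msg.recip) ∩ B₀ := Finset.mem_inter.2 ⟨hcon, hx⟩
          rw [hdisj.2] at this; exact absurd this (Finset.notMem_empty x)
        by_contra hxb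
        exact hnot x (fun hag => by
          rcases Finset.mem_union.1 hag with h | h
          exacts [hxSR h, hxb h]) (Finset.mem_union.2 (Or.inr hx))
      · intro hx
        have := hrecv x (Finset.mem_union.2 (Or.inr hx))
        rcases Finset.mem_union.1 this with h | h
        · exact absurd (Finset.mem_inter.2
            ⟨h, hx⟩) (by rw [he.2]; exact Finset.notMem_empty x)
        · exact h
    have : (⟨e.msg, B₀⟩ : Email Agent Note) = e := by rw [hB]
    rwa [this] at hB₀
  · intro hmem
    refine ⟨⟨e.bcc, hmem⟩, ?_, ?_⟩ <;> rw [sat_bigAnd]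
    · intro φ hφ
      simp only [List.mem_map, Finset.mem_toList] at hφ
      obtain ⟨i, hi, rfl⟩ := hφ
      exact ⟨e.bcc, hmem, hi⟩
    · intro φ hφ
      simp only [List.mem_map, Finset.mem_toList, Finset.mem_compl] at hφ
      obtain ⟨i, hi, rfl⟩ := hφ
      rintro ⟨B₁, hB₁, hiB₁⟩
      have heq := huniq _ hB₁ _ hmem rfl
      rw [Email.mk.injEq] at heq
      rw [heq.2] at hiB₁
      exact hi hiB₁

lemma shared_transfer {A : Finset Agent} (hA : 3 ≤ A.card) {s s' : EState Agent Note}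
    (h : EState.simG A s s') :
    ∀ e ∈ s.emails, e.SharedBy A → ∃ B', (⟨e.msg, B'⟩ : Email Agent Note) ∈ s'.emails ∧
      Email.SharedBy A (⟨e.msg, B'⟩ : Email Agent Note) := by
  induction h with
  | refl => intro e he hsh; exact ⟨e.bcc, he, hsh⟩
  | tail h₁ h₂ ih =>
    intro e he hsh
    obtain ⟨B', hB', hsh'⟩ := ih e he hsh
    obtain ⟨i, hiA, hsim⟩ := h₂
    have hsub := shared_of_card hA hsh'
    have hi : i ∈ (⟨e.msg, B'⟩ : Email Agent Note).agents := by
      rw [mem_agents]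
      have := hsub hiA
      rcases Finset.mem_union.1 this with h | h
      exacts [Or.inl h, Or.inr (Or.inl h)]
    obtain ⟨e'', he'', hsim'⟩ := hsim.2.1 _ hB' hi
    have hmsg : e.msg = e''.msg := hsim'.1
    have he2 : (⟨e.msg, e''.bcc⟩ : Email Agent Note) = e'' := by rw [hmsg]
    exact ⟨e''.bcc, he2 ▸ he'', Or.inl hsub⟩
variable [DecidableEq Note]

noncomputable def keepSet (s : EState Agent Note) (P : Email Agent Note → Prop) :
    Finset (Email Agent Note) :=
  @Finset.filter _ (fun x => ¬ P x) (fun _ => Classical.propDecidable _) s.emails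

noncomputable def badSet (s : EState Agent Note) (P : Email Agent Note → Prop) :
    Finset (Email Agent Note) :=
  @Finset.filter _ (fun x => P x) (fun _ => Classical.propDecidable _) s.emails

lemma mem_keepSet {s : EState Agent Note} {P : Email Agent Note → Prop}
    {x : Email Agent Note} : x ∈ keepSet s P ↔ x ∈ s.emails ∧ ¬ P x := by
  unfold keepSet
  exact @Finset.mem_filter _ _ (fun _ => Classical.propDecidable _) _ _

lemma mem_badSet {s : EState Agent Note} {P : Email Agent Note → Prop}
    {x : Email Agent Note} : x ∈ badSet s P ↔ x ∈ s.emails ∧ P x := by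
  unfold badSet
  exact @Finset.mem_filter _ _ (fun _ => Classical.propDecidable _) _ _

noncomputable def stf (s : EState Agent Note) (P : Email Agent Note → Prop)
    (F : Finset (Email Agent Note)) : EState Agent Note :=
  ⟨keepSet s P ∪ F,
   fun j => {l | l ∈ s.notes j ∨ ∃ e ∈ s.emails, P e ∧ e ∉ F ∧
     j ∈ e.msg.recip ∪ e.bcc ∧ l ∈ e.msg.FI}⟩

lemma stf_bad (s : EState Agent Note) (P : Email Agent Note → Prop) :
    stf s P (badSet s P) = s := by
  obtain ⟨E, L⟩ := s
  simp only [stf, EState.mk.injEq]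
  constructor
  · ext x
    simp only [Finset.mem_union, mem_keepSet, mem_badSet]
    tauto
  · funext j
    apply Set.ext; intro l
    simp only [Set.mem_setOf_eq]
    constructor
    · rintro (h | ⟨e, he, hP, hnF, -, -⟩)
      · exact h
      · exact absurd (mem_badSet.2 ⟨he, hP⟩) hnF
    · exact Or.inl

lemma stf_chain (s : EState Agent Note) (A : Finset Agent) (hA : 3 ≤ A.card)
    (P : Email Agent Note → Prop)
    (ha : ∀ e ∈ s.emails, P e → ¬ e.SharedBy A) :
    ∀ F : Finset (Email Agent Note), F ⊆ badSet s P →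
      EState.simG A (stf s P F) (stf s P ∅) := by
  intro F
  induction F using Finset.strongInductionOn with
  | _ F ih =>
    intro hF
    rcases F.eq_empty_or_nonempty with rfl | ⟨e₀, he₀⟩
    · exact Relation.ReflTransGen.refl
    have hbad := mem_badSet.1 (hF he₀)
    obtain ⟨he₀E, hPe₀⟩ := hbad
    have he₀K : e₀ ∉ keepSet s P := fun h => (mem_keepSet.1 h).2 hPe₀
    obtain ⟨i, hiA, hiSR⟩ := not_shared_exists (ha e₀ he₀E hPe₀)
    have hiS : i ∉ e₀.msg.S := fun h => hiSR (Finset.mem_union.2 (Or.inl h))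
    have hiR : i ∉ e₀.msg.recip := fun h => hiSR (Finset.mem_union.2 (Or.inr h))
    have htail := ih (F.erase e₀) (Finset.erase_ssubset he₀)
      (Finset.Subset.trans (Finset.erase_subset _ _) hF)
    -- helper: e ∉ F ↔ (e ∉ F.erase e₀ ∧ e ≠ e₀), used in notes proofs
    by_cases hib : i ∈ e₀.bcc
    · -- two steps through intermediate state u
      set e₀' : Email Agent Note := ⟨e₀.msg, e₀.bcc.erase i⟩ with he₀'def
      obtain ⟨k, hkA, hks, hki⟩ := exists_third hA e₀.msg.sender i
      set u : EState Agent Note :=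
        ⟨insert e₀' ((keepSet s P ∪ F).erase e₀),
         fun j => if j = i then (stf s P F).notes i ∪ e₀.msg.FI else (stf s P F).notes j⟩
        with hudef
      have hkag : k ∈ e₀.agents → e₀.sim k e₀' := by
        intro hk
        refine ⟨rfl, ?_⟩
        rcases mem_agents.1 hk with h | h | h
        · exact absurd (Finset.mem_singleton.1 h) hks
        · by_cases hkS : k ∈ e₀.msg.S
          · exact absurd (Finset.mem_singleton.1 hkS) hks
          · exact Or.inr (Or.inl (Finset.mem_sdiff.2 ⟨h, hkS⟩))
        · exact Or.inr (Or.inr (Finset.mem_inter.2 ⟨h, Finset.mem_erase.2 ⟨hki, h⟩⟩))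
      have step1 : (stf s P F).sim k u := by
        refine ⟨by simp only [hudef]; rw [if_neg hki], ?_, ?_⟩
        · intro f hf hkf
          by_cases hfe : f = e₀
          · exact ⟨e₀', Finset.mem_insert_self _ _, hfe ▸ hkag (hfe ▸ hkf)⟩
          · exact ⟨f, Finset.mem_insert_of_mem (Finset.mem_erase.2 ⟨hfe, hf⟩),
              Email.sim_refl' hkf⟩
        · intro f hf hkf
          rcases Finset.mem_insert.1 hf with rfl | hf'
          · refine ⟨e₀, Finset.mem_union_right _ he₀, hkag ?_⟩
            rcases mem_agents.1 hkf with h | h | h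
            · exact mem_agents.2 (Or.inl h)
            · exact mem_agents.2 (Or.inr (Or.inl h))
            · exact mem_agents.2 (Or.inr (Or.inr (Finset.mem_of_mem_erase h)))
          · exact ⟨f, Finset.mem_of_mem_erase hf', Email.sim_refl' hkf⟩
      have step2 : u.sim i (stf s P (F.erase e₀)) := by
        refine ⟨?_, ?_, ?_⟩
        · -- notes at i
          simp only [hudef, if_true]
          apply Set.ext; intro l
          simp only [stf, Set.mem_union, Set.mem_setOf_eq]
          constructor
          · rintro ((h | ⟨e, he, hP, hnF, hrec, hFI⟩) | hFI)
            · exact Or.inl h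
            · exact Or.inr ⟨e, he, hP, fun hc => hnF (Finset.mem_of_mem_erase hc), hrec, hFI⟩
            · exact Or.inr ⟨e₀, he₀E, hPe₀, Finset.notMem_erase _ _,
                Finset.mem_union.2 (Or.inr hib), hFI⟩
          · rintro (h | ⟨e, he, hP, hnF, hrec, hFI⟩)
            · exact Or.inl (Or.inl h)
            · by_cases hee : e = e₀
              · exact Or.inr (hee ▸ hFI)
              · exact Or.inl (Or.inr ⟨e, he, hP,
                  fun hc => hnF (Finset.mem_erase.2 ⟨hee, hc⟩), hrec, hFI⟩)
        · intro f hf hif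
          rcases Finset.mem_insert.1 hf with rfl | hf'
          · exfalso
            rcases mem_agents.1 hif with h | h | h
            · exact hiS h
            · exact hiR h
            · exact (Finset.mem_erase.1 h).1 rfl
          · refine ⟨f, ?_, Email.sim_refl' hif⟩
            have hfe : f ≠ e₀ := (Finset.mem_erase.1 hf').1
            rcases Finset.mem_union.1 (Finset.mem_of_mem_erase hf') with h | h
            · exact Finset.mem_union_left _ h
            · exact Finset.mem_union_right _ (Finset.mem_erase.2 ⟨hfe, h⟩)
        · intro f hf hif
          have hfe : f ≠ e₀ := by
            rintro rfl
            rcases Finset.mem_union.1 hf with h | h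
            · exact he₀K h
            · exact (Finset.mem_erase.1 h).1 rfl
          have : f ∈ (keepSet s P ∪ F).erase e₀ := by
            refine Finset.mem_erase.2 ⟨hfe, ?_⟩
            rcases Finset.mem_union.1 hf with h | h
            · exact Finset.mem_union_left _ h
            · exact Finset.mem_union_right _ (Finset.mem_of_mem_erase h)
          exact ⟨f, Finset.mem_insert_of_mem this, Email.sim_refl' hif⟩
      exact Relation.ReflTransGen.head ⟨k, hkA, step1⟩
        (Relation.ReflTransGen.head ⟨i, hiA, step2⟩ htail)
    · -- single step
      have hiag : i ∉ e₀.agents := fun h => by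
        rcases mem_agents.1 h with h | h | h
        exacts [hiS h, hiR h, hib h]
      have step : (stf s P F).sim i (stf s P (F.erase e₀)) := by
        refine ⟨?_, ?_, ?_⟩
        · apply Set.ext; intro l
          simp only [stf, Set.mem_setOf_eq]
          constructor
          · rintro (h | ⟨e, he, hP, hnF, hrec, hFI⟩)
            · exact Or.inl h
            · exact Or.inr ⟨e, he, hP, fun hc => hnF (Finset.mem_of_mem_erase hc), hrec, hFI⟩
          · rintro (h | ⟨e, he, hP, hnF, hrec, hFI⟩)
            · exact Or.inl h
            · by_cases hee : e = e₀
              · exact absurd (mem_agents.2 (Or.inr (Finset.mem_union.1 (hee ▸ hrec))))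
                  (hee ▸ hiag)
              · exact Or.inr ⟨e, he, hP,
                  fun hc => hnF (Finset.mem_erase.2 ⟨hee, hc⟩), hrec, hFI⟩
        · intro f hf hif
          have hfe : f ≠ e₀ := fun h => hiag (h ▸ hif)
          refine ⟨f, ?_, Email.sim_refl' hif⟩
          rcases Finset.mem_union.1 hf with h | h
          · exact Finset.mem_union_left _ h
          · exact Finset.mem_union_right _ (Finset.mem_erase.2 ⟨hfe, h⟩)
        · intro f hf hif
          refine ⟨f, ?_, Email.sim_refl' hif⟩
          rcases Finset.mem_union.1 hf with h | h
          · exact Finset.mem_union_left _ h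
          · exact Finset.mem_union_right _ (Finset.mem_of_mem_erase h)
      exact Relation.ReflTransGen.head ⟨i, hiA, step⟩ htail
lemma stf_empty_legal (s : EState Agent Note) (hs : s.Legal) (P : Email Agent Note → Prop)
    (hb : ∀ f ∈ s.emails, ¬ P f → ∀ (i : Agent) (l : Note) (m : Msg Agent Note)
      (G : Finset Agent), f.msg = Msg.fwd i l m G → ∀ e ∈ s.emails, e.msg = m → ¬ P e) :
    (stf s P ∅).Legal := by
  obtain ⟨⟨hwf, huniq⟩, r, hirr, htr, h1, h2, h3⟩ := hs
  have hmem : ∀ f ∈ (stf s P ∅).emails, f ∈ s.emails ∧ ¬ P f := by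
    intro f hf
    rcases Finset.mem_union.1 hf with h | h
    · exact mem_keepSet.1 h
    · exact absurd h (Finset.notMem_empty f)
  have hnotes : ∀ j l, l ∈ s.notes j → l ∈ (stf s P ∅).notes j := fun j l h => Or.inl h
  refine ⟨⟨fun f hf => hwf f (hmem f hf).1,
    fun f hf f' hf' hm => huniq f (hmem f hf).1 f' (hmem f' hf').1 hm⟩,
    r, fun f hf => hirr f (hmem f hf).1,
    fun f hf f' hf' f'' hf'' => htr f (hmem f hf).1 f' (hmem f' hf').1 f'' (hmem f'' hf'').1,
    ?_, ?_, ?_⟩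
  · intro f hf i l m G hfm
    obtain ⟨hfE, hPf⟩ := hmem f hf
    obtain ⟨e', he', hm', hr', hi'⟩ := h1 f hfE i l m G hfm
    have : ¬ P e' := hb f hfE hPf i l m G hfm e' he' hm'
    exact ⟨e', Finset.mem_union_left _ (mem_keepSet.2 ⟨he', this⟩), hm', hr', hi'⟩
  · intro f hf i l G hfm hl
    obtain ⟨hfE, hPf⟩ := hmem f hf
    have hlL : l ∉ s.notes i := fun h => hl (hnotes i l h)
    obtain ⟨e', he', hr', hi', hFI⟩ := h2 f hfE i l G hfm hlL
    have hPe' : ¬ P e' := by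
      intro hP
      exact hl (Or.inr ⟨e', he', hP, Finset.notMem_empty e', hi', hFI⟩)
    exact ⟨e', Finset.mem_union_left _ (mem_keepSet.2 ⟨he', hPe'⟩), hr', hi', hFI⟩
  · intro f hf i l m G hfm hl
    obtain ⟨hfE, hPf⟩ := hmem f hf
    have hlL : l ∉ s.notes i := fun h => hl (hnotes i l h)
    obtain ⟨e', he', hr', hi', hFI⟩ := h3 f hfE i l m G hfm hlL
    have hPe' : ¬ P e' := by
      intro hP
      exact hl (Or.inr ⟨e', he', hP, Finset.notMem_empty e', hi', hFI⟩)
    exact ⟨e', Finset.mem_union_left _ (mem_keepSet.2 ⟨he', hPe'⟩), hr', hi', hFI⟩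

lemma removal (s : EState Agent Note) (hs : s.Legal) (A : Finset Agent) (hA : 3 ≤ A.card)
    (P : Email Agent Note → Prop)
    (ha : ∀ e ∈ s.emails, P e → ¬ e.SharedBy A)
    (hb : ∀ f ∈ s.emails, ¬ P f → ∀ (i : Agent) (l : Note) (m : Msg Agent Note)
      (G : Finset Agent), f.msg = Msg.fwd i l m G → ∀ e ∈ s.emails, e.msg = m → ¬ P e) :
    ∃ s' : EState Agent Note, s'.Legal ∧ EState.simG A s s' ∧
      (∀ f : Email Agent Note, f ∈ s'.emails ↔ f ∈ s.emails ∧ ¬ P f) := by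
  refine ⟨stf s P ∅, stf_empty_legal s hs P hb, ?_, ?_⟩
  · have := stf_chain s A hA P ha (badSet s P) (Finset.Subset.refl _)
    rwa [stf_bad] at this
  · intro f
    constructor
    · intro hf
      rcases Finset.mem_union.1 hf with h | h
      · exact mem_keepSet.1 h
      · exact absurd h (Finset.notMem_empty f)
    · intro hf
      exact Finset.mem_union_left _ (mem_keepSet.2 hf)

lemma legal_enlarge (s : EState Agent Note) (hs : s.Legal) (e : Email Agent Note)
    (hes : e ∈ s.emails) (j : Agent) (hj : j ∉ e.agents) :
    EState.Legal ⟨insert ⟨e.msg, e.bcc ∪ {j}⟩ (s.emails.erase e), s.notes⟩ := by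
  obtain ⟨⟨hwf, huniq⟩, r, hirr, htr, h1, h2, h3⟩ := hs
  set eP : Email Agent Note := ⟨e.msg, e.bcc ∪ {j}⟩ with hePdef
  have hjb : j ∉ e.bcc := fun h => hj (mem_agents.2 (Or.inr (Or.inr h)))
  have hePE : eP ∉ s.emails := by
    intro h
    have := huniq eP h e hes rfl
    rw [hePdef, show e = (⟨e.msg, e.bcc⟩ : Email Agent Note) from rfl, Email.mk.injEq] at this
    exact hjb (this.2 ▸ Finset.mem_union.2 (Or.inr (Finset.mem_singleton_self j)))
  set ρ : Email Agent Note → Email Agent Note := fun x => if x = eP then e else x with hρdef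
  have hρ : ∀ x ∈ insert eP (s.emails.erase e), ρ x ∈ s.emails ∧ (ρ x).msg = x.msg := by
    intro x hx
    rcases Finset.mem_insert.1 hx with rfl | hx'
    · simp only [hρdef, if_pos rfl]
      exact ⟨hes, rfl⟩
    · have hne : x ≠ eP := fun h => hePE (h ▸ Finset.mem_of_mem_erase hx')
      simp only [hρdef, if_neg hne]
      exact ⟨Finset.mem_of_mem_erase hx', trivial⟩
  have hρe : ρ eP = e := by simp [hρdef]
  have hρid : ∀ x, x ≠ eP → ρ x = x := fun x h => by simp [hρdef, if_neg h]
  refine ⟨⟨?_, ?_⟩, fun x y => r (ρ x) (ρ y), ?_, ?_, ?_, ?_, ?_⟩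
  · -- wellformed emails
    intro f hf
    rcases Finset.mem_insert.1 hf with rfl | hf'
    · refine ⟨(hwf e hes).1, ?_⟩
      have hd := (hwf e hes).2
      rw [Finset.eq_empty_iff_forall_notMem]
      intro a ha
      obtain ⟨haSR, hab⟩ := Finset.mem_inter.1 ha
      rcases Finset.mem_union.1 hab with h | h
      · exact Finset.eq_empty_iff_forall_notMem.1 hd a (Finset.mem_inter.2 ⟨haSR, h⟩)
      · rw [Finset.mem_singleton] at h
        subst h
        exact hj (mem_agents.2 ((Finset.mem_union.1 haSR).imp id Or.inl))
    · exact hwf f (Finset.mem_of_mem_erase hf')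
  · -- uniqueness
    intro f hf f' hf' hm
    rcases Finset.mem_insert.1 hf with rfl | hf1 <;> rcases Finset.mem_insert.1 hf' with rfl | hf2
    · rfl
    · exfalso
      have := huniq f' (Finset.mem_of_mem_erase hf2) e hes hm.symm
      exact (Finset.mem_erase.1 hf2).1 this
    · exfalso
      have := huniq f (Finset.mem_of_mem_erase hf1) e hes hm
      exact (Finset.mem_erase.1 hf1).1 this
    · exact huniq f (Finset.mem_of_mem_erase hf1) f' (Finset.mem_of_mem_erase hf2) hm
  · exact fun f hf => hirr (ρ f) (hρ f hf).1
  · exact fun f hf f' hf' f'' hf'' => htr (ρ f) (hρ f hf).1 (ρ f') (hρ f' hf').1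
      (ρ f'') (hρ f'' hf'').1
  · -- L1
    intro f hf i l m G hfm
    obtain ⟨hρf, hρm⟩ := hρ f hf
    obtain ⟨e₂, he₂, hm₂, hr₂, hi₂⟩ := h1 (ρ f) hρf i l m G (hρm.trans hfm)
    by_cases hee : e₂ = e
    · subst hee
      refine ⟨eP, Finset.mem_insert_self _ _, hm₂, by show r (ρ eP) (ρ f); rw [hρe]; exact hr₂, ?_⟩
      rcases Finset.mem_union.1 hi₂ with h | h
      · exact Finset.mem_union_left _ h
      · exact Finset.mem_union_right _ (Finset.mem_union_left _ h)
    · have hne : e₂ ≠ eP := fun h => hePE (h ▸ he₂)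
      refine ⟨e₂, Finset.mem_insert_of_mem (Finset.mem_erase.2 ⟨hee, he₂⟩), hm₂,
        by show r (ρ e₂) (ρ f); rw [hρid e₂ hne]; exact hr₂, hi₂⟩
  · -- L2
    intro f hf i l G hfm hl
    obtain ⟨hρf, hρm⟩ := hρ f hf
    obtain ⟨e₂, he₂, hr₂, hi₂, hFI⟩ := h2 (ρ f) hρf i l G (hρm.trans hfm) hl
    by_cases hee : e₂ = e
    · subst hee
      refine ⟨eP, Finset.mem_insert_self _ _, by show r (ρ eP) (ρ f); rw [hρe]; exact hr₂, ?_, hFI⟩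
      rcases Finset.mem_union.1 hi₂ with h | h
      · exact Finset.mem_union_left _ h
      · exact Finset.mem_union_right _ (Finset.mem_union_left _ h)
    · have hne : e₂ ≠ eP := fun h => hePE (h ▸ he₂)
      exact ⟨e₂, Finset.mem_insert_of_mem (Finset.mem_erase.2 ⟨hee, he₂⟩),
        by show r (ρ e₂) (ρ f); rw [hρid e₂ hne]; exact hr₂, hi₂, hFI⟩
  · -- L3
    intro f hf i l m G hfm hl
    obtain ⟨hρf, hρm⟩ := hρ f hf
    obtain ⟨e₂, he₂, hr₂, hi₂, hFI⟩ := h3 (ρ f) hρf i l m G (hρm.trans hfm) hl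
    by_cases hee : e₂ = e
    · subst hee
      refine ⟨eP, Finset.mem_insert_self _ _, by show r (ρ eP) (ρ f); rw [hρe]; exact hr₂, ?_, hFI⟩
      rcases Finset.mem_union.1 hi₂ with h | h
      · exact Finset.mem_union_left _ h
      · exact Finset.mem_union_right _ (Finset.mem_union_left _ h)
    · have hne : e₂ ≠ eP := fun h => hePE (h ▸ he₂)
      exact ⟨e₂, Finset.mem_insert_of_mem (Finset.mem_erase.2 ⟨hee, he₂⟩),
        by show r (ρ e₂) (ρ f); rw [hρid e₂ hne]; exact hr₂, hi₂, hFI⟩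
lemma legal_shrink (t : EState Agent Note) (ht : t.Legal) (e : Email Agent Note)
    (het : e ∈ t.emails) (i : Agent) (hib : i ∈ e.bcc)
    (hno : ∀ f ∈ t.emails, ∀ (l : Note) (G : Finset Agent), f.msg ≠ Msg.fwd i l e.msg G) :
    EState.Legal ⟨insert ⟨e.msg, e.bcc.erase i⟩ (t.emails.erase e),
      fun j => if j = i then t.notes i ∪ e.msg.FI else t.notes j⟩ := by
  obtain ⟨⟨hwf, huniq⟩, r, hirr, htr, h1, h2, h3⟩ := ht
  set eM : Email Agent Note := ⟨e.msg, e.bcc.erase i⟩ with heMdef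
  have heME : eM ∉ t.emails := by
    intro h
    have := huniq eM h e het rfl
    rw [heMdef, show e = (⟨e.msg, e.bcc⟩ : Email Agent Note) from rfl, Email.mk.injEq] at this
    exact (Finset.mem_erase.1 (this.2 ▸ hib)).1 rfl
  set ρ : Email Agent Note → Email Agent Note := fun x => if x = eM then e else x with hρdef
  have hρ : ∀ x ∈ insert eM (t.emails.erase e), ρ x ∈ t.emails ∧ (ρ x).msg = x.msg := by
    intro x hx
    rcases Finset.mem_insert.1 hx with rfl | hx'
    · simp only [hρdef, if_pos rfl]
      exact ⟨het, rfl⟩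
    · have hne : x ≠ eM := fun h => heME (h ▸ Finset.mem_of_mem_erase hx')
      simp only [hρdef, if_neg hne]
      exact ⟨Finset.mem_of_mem_erase hx', trivial⟩
  have hρe : ρ eM = e := by simp [hρdef]
  have hρid : ∀ x, x ≠ eM → ρ x = x := fun x h => by simp [hρdef, if_neg h]
  have hnotes : ∀ (j : Agent) (l : Note), l ∈ t.notes j →
      l ∈ (if j = i then t.notes i ∪ e.msg.FI else t.notes j) := by
    intro j l h
    by_cases hji : j = i
    · rw [if_pos hji]; exact Or.inl (hji ▸ h)
    · rwa [if_neg hji]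
  refine ⟨⟨?_, ?_⟩, fun x y => r (ρ x) (ρ y), ?_, ?_, ?_, ?_, ?_⟩
  · intro f hf
    rcases Finset.mem_insert.1 hf with rfl | hf'
    · refine ⟨(hwf e het).1, ?_⟩
      rw [Finset.eq_empty_iff_forall_notMem]
      intro a ha
      obtain ⟨haSR, hab⟩ := Finset.mem_inter.1 ha
      exact Finset.eq_empty_iff_forall_notMem.1 (hwf e het).2 a
        (Finset.mem_inter.2 ⟨haSR, Finset.mem_of_mem_erase hab⟩)
    · exact hwf f (Finset.mem_of_mem_erase hf')
  · intro f hf f' hf' hm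
    rcases Finset.mem_insert.1 hf with rfl | hf1 <;> rcases Finset.mem_insert.1 hf' with rfl | hf2
    · rfl
    · exact absurd (huniq f' (Finset.mem_of_mem_erase hf2) e het hm.symm)
        (Finset.mem_erase.1 hf2).1
    · exact absurd (huniq f (Finset.mem_of_mem_erase hf1) e het hm) (Finset.mem_erase.1 hf1).1
    · exact huniq f (Finset.mem_of_mem_erase hf1) f' (Finset.mem_of_mem_erase hf2) hm
  · exact fun f hf => hirr (ρ f) (hρ f hf).1
  · exact fun f hf f' hf' f'' hf'' => htr (ρ f) (hρ f hf).1 (ρ f') (hρ f' hf').1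
      (ρ f'') (hρ f'' hf'').1
  · -- L1
    intro f hf i₂ l m G hfm
    obtain ⟨hρf, hρm⟩ := hρ f hf
    obtain ⟨e₂, he₂, hm₂, hr₂, hi₂⟩ := h1 (ρ f) hρf i₂ l m G (hρm.trans hfm)
    by_cases hee : e₂ = e
    · subst hee
      refine ⟨eM, Finset.mem_insert_self _ _, hm₂, by show r (ρ eM) (ρ f); rw [hρe]; exact hr₂, ?_⟩
      rcases Finset.mem_union.1 hi₂ with h | h
      · exact Finset.mem_union_left _ h
      · by_cases hii : i₂ = i
        · exfalso
          subst hii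
          exact hno (ρ f) hρf l G (hρm.trans (by rw [hfm, hm₂]))
        · exact Finset.mem_union_right _ (Finset.mem_erase.2 ⟨hii, h⟩)
    · have hne : e₂ ≠ eM := fun h => heME (h ▸ he₂)
      exact ⟨e₂, Finset.mem_insert_of_mem (Finset.mem_erase.2 ⟨hee, he₂⟩), hm₂,
        by show r (ρ e₂) (ρ f); rw [hρid e₂ hne]; exact hr₂, hi₂⟩
  · -- L2
    intro f hf i₂ l G hfm hl
    obtain ⟨hρf, hρm⟩ := hρ f hf
    have hlt : l ∉ t.notes i₂ := fun h => hl (hnotes i₂ l h)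
    obtain ⟨e₂, he₂, hr₂, hi₂, hFI⟩ := h2 (ρ f) hρf i₂ l G (hρm.trans hfm) hlt
    by_cases hee : e₂ = e
    · subst hee
      refine ⟨eM, Finset.mem_insert_self _ _, by show r (ρ eM) (ρ f); rw [hρe]; exact hr₂, ?_, hFI⟩
      rcases Finset.mem_union.1 hi₂ with h | h
      · exact Finset.mem_union_left _ h
      · by_cases hii : i₂ = i
        · exfalso
          subst hii
          apply hl
          show l ∈ (if i₂ = i₂ then t.notes i₂ ∪ e₂.msg.FI else t.notes i₂)
          rw [if_pos rfl]
          exact Or.inr hFI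
        · exact Finset.mem_union_right _ (Finset.mem_erase.2 ⟨hii, h⟩)
    · have hne : e₂ ≠ eM := fun h => heME (h ▸ he₂)
      exact ⟨e₂, Finset.mem_insert_of_mem (Finset.mem_erase.2 ⟨hee, he₂⟩),
        by show r (ρ e₂) (ρ f); rw [hρid e₂ hne]; exact hr₂, hi₂, hFI⟩
  · -- L3
    intro f hf i₂ l m G hfm hl
    obtain ⟨hρf, hρm⟩ := hρ f hf
    have hlt : l ∉ t.notes i₂ := fun h => hl (hnotes i₂ l h)
    obtain ⟨e₂, he₂, hr₂, hi₂, hFI⟩ := h3 (ρ f) hρf i₂ l m G (hρm.trans hfm) hlt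
    by_cases hee : e₂ = e
    · subst hee
      refine ⟨eM, Finset.mem_insert_self _ _, by show r (ρ eM) (ρ f); rw [hρe]; exact hr₂, ?_, hFI⟩
      rcases Finset.mem_union.1 hi₂ with h | h
      · exact Finset.mem_union_left _ h
      · by_cases hii : i₂ = i
        · exfalso
          subst hii
          apply hl
          show l ∈ (if i₂ = i₂ then t.notes i₂ ∪ e₂.msg.FI else t.notes i₂)
          rw [if_pos rfl]
          exact Or.inr hFI
        · exact Finset.mem_union_right _ (Finset.mem_erase.2 ⟨hii, h⟩)
    · have hne : e₂ ≠ eM := fun h => heME (h ▸ he₂)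
      exact ⟨e₂, Finset.mem_insert_of_mem (Finset.mem_erase.2 ⟨hee, he₂⟩),
        by show r (ρ e₂) (ρ f); rw [hρid e₂ hne]; exact hr₂, hi₂, hFI⟩
lemma sat_msg {s : EState Agent Note} {m : Msg Agent Note} :
    Sat s (.msg m) ↔ ∃ B, (⟨m, B⟩ : Email Agent Note) ∈ s.emails := Iff.rfl

lemma sat_recv {s : EState Agent Note} {i : Agent} {m : Msg Agent Note} :
    Sat s (.recv i m) ↔ ∃ B, (⟨m, B⟩ : Email Agent Note) ∈ s.emails ∧
      i ∈ m.S ∪ m.recip ∪ B := Iff.rfl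

end AuxCK

/-- for `|A| ≥ 3`, `s ⊨ C_A m_B` iff C1, C2 and C3 hold. -/
theorem common_knowledge_email_iff {Agent Note : Type} [DecidableEq Agent] [Fintype Agent]
    [Nonempty Agent] [DecidableEq Note] (s : EState Agent Note) (hs : s.Legal)
    (A : Finset Agent) (hA : 3 ≤ A.card) (e : Email Agent Note) (he : e.WF) :
    Sat s (.ck A e.form) ↔
      ((Finset.univ : Finset Agent) = e.msg.S ∪ e.msg.recip ∪ e.bcc) ∧
      (∀ i ∈ e.bcc, ∃ e' ∈ s.emails, e'.SharedBy A ∧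
        Valid (Form.imp (.msg e'.msg) (.recv i e.msg))) ∧
      (∃ e' ∈ s.emails, e'.SharedBy A ∧ Valid (Form.imp (.msg e'.msg) (.msg e.msg))) := by
  constructor
  · intro hck
    have hck' : ∀ s', EState.Legal s' → EState.simG A s s' → Sat s' e.form := hck
    have hes : e ∈ s.emails := (form_iff hs he).1 (hck' s hs Relation.ReflTransGen.refl)
    refine ⟨?_, ?_, ?_⟩
    · -- C1
      by_contra hC1
      have hj : ∃ j, j ∉ e.agents := by
        by_contra hcc
        push_neg at hcc
        exact hC1 (Finset.eq_univ_of_forall hcc).symm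
      obtain ⟨j, hj⟩ := hj
      obtain ⟨i, hiA, his, hij⟩ := exists_third hA e.msg.sender j
      have hleg := legal_enlarge s hs e hes j hj
      set eP : Email Agent Note := ⟨e.msg, e.bcc ∪ {j}⟩ with hePdef
      set s'' : EState Agent Note := ⟨insert eP (s.emails.erase e), s.notes⟩ with hs''def
      have hsimeP : i ∈ e.agents → e.sim i eP := by
        intro hif
        refine ⟨rfl, ?_⟩
        rcases mem_agents.1 hif with h | h | h
        · exact absurd (Finset.mem_singleton.1 h) his
        · by_cases hS : i ∈ e.msg.S
          · exact absurd (Finset.mem_singleton.1 hS) his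
          · exact Or.inr (Or.inl (Finset.mem_sdiff.2 ⟨h, hS⟩))
        · exact Or.inr (Or.inr (Finset.mem_inter.2 ⟨h, Finset.mem_union.2 (Or.inl h)⟩))
      have hsim : s.sim i s'' := by
        refine ⟨rfl, ?_, ?_⟩
        · intro f hf hif
          by_cases hfe : f = e
          · subst hfe
            exact ⟨eP, Finset.mem_insert_self _ _, hsimeP hif⟩
          · exact ⟨f, Finset.mem_insert_of_mem (Finset.mem_erase.2 ⟨hfe, hf⟩),
              Email.sim_refl' hif⟩
        · intro f hf hif
          rcases Finset.mem_insert.1 hf with rfl | hf'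
          · refine ⟨e, hes, hsimeP ?_⟩
            rcases mem_agents.1 hif with h | h | h
            · exact mem_agents.2 (Or.inl h)
            · exact mem_agents.2 (Or.inr (Or.inl h))
            · rcases Finset.mem_union.1 h with h' | h'
              · exact mem_agents.2 (Or.inr (Or.inr h'))
              · exact absurd (Finset.mem_singleton.1 h') hij
          · exact ⟨f, Finset.mem_of_mem_erase hf', Email.sim_refl' hif⟩
      have hmem := (form_iff hleg he).1
        (hck' s'' hleg (Relation.ReflTransGen.single ⟨i, hiA, hsim⟩))
      rcases Finset.mem_insert.1 hmem with h | h
      · have : j ∈ e.bcc := by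
          have hb := congrArg Email.bcc h
          rw [hePdef] at hb
          rw [hb]
          exact Finset.mem_union_right _ (Finset.mem_singleton_self j)
        exact hj (mem_agents.2 (Or.inr (Or.inr this)))
      · exact (Finset.mem_erase.1 h).1 rfl
    · -- C2
      intro i hib
      by_contra hno
      push_neg at hno
      set P : Email Agent Note → Prop :=
        fun f => Valid (Form.imp (.msg f.msg) (.recv i e.msg)) with hPdef
      have ha : ∀ f ∈ s.emails, P f → ¬ f.SharedBy A := fun f hf hP hsh => hno f hf hsh hP
      have hb : ∀ f ∈ s.emails, ¬ P f → ∀ (i₂ : Agent) (l : Note) (m : Msg Agent Note)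
          (G : Finset Agent), f.msg = Msg.fwd i₂ l m G →
          ∀ e' ∈ s.emails, e'.msg = m → ¬ P e' := by
        intro f hf hPf i₂ l m G hfm e' he' hm' hPe'
        apply hPf
        intro t ht
        refine sat_imp.2 fun hsat => ?_
        have h1 : Sat t (Form.msg m) :=
          sat_imp.1 (valid_fwd_msg i₂ l m G t ht) (by rwa [hfm] at hsat)
        exact sat_imp.1 (hPe' t ht) (by rwa [hm'])
      obtain ⟨s₁, hleg₁, hsim₁, hmem₁⟩ := removal s hs A hA P ha hb
      by_cases hPe : P e
      · have hmem := (form_iff hleg₁ he).1 (hck' s₁ hleg₁ hsim₁)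
        exact ((hmem₁ e).1 hmem).2 hPe
      · have heK : e ∈ s₁.emails := (hmem₁ e).2 ⟨hes, hPe⟩
        have hnofwd : ∀ f ∈ s₁.emails, ∀ (l : Note) (G : Finset Agent),
            f.msg ≠ Msg.fwd i l e.msg G := by
          intro f hf l G hfm
          have hPf : P f := by
            intro t ht
            refine sat_imp.2 fun hsat => ?_
            exact sat_imp.1 (valid_fwd_recv i l e.msg G t ht) (by rwa [hfm] at hsat)
          exact ((hmem₁ f).1 hf).2 hPf
        have hlegw := legal_shrink s₁ hleg₁ e heK i hib hnofwd
        set eM : Email Agent Note := ⟨e.msg, e.bcc.erase i⟩ with heMdef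
        set w : EState Agent Note := ⟨insert eM (s₁.emails.erase e),
          fun j => if j = i then s₁.notes i ∪ e.msg.FI else s₁.notes j⟩ with hwdef
        obtain ⟨k, hkA, hks, hki⟩ := exists_third hA e.msg.sender i
        have hsimeM : k ∈ e.agents → e.sim k eM := by
          intro hk
          refine ⟨rfl, ?_⟩
          rcases mem_agents.1 hk with h | h | h
          · exact absurd (Finset.mem_singleton.1 h) hks
          · by_cases hS : k ∈ e.msg.S
            · exact absurd (Finset.mem_singleton.1 hS) hks
            · exact Or.inr (Or.inl (Finset.mem_sdiff.2 ⟨h, hS⟩))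
          · exact Or.inr (Or.inr (Finset.mem_inter.2 ⟨h, Finset.mem_erase.2 ⟨hki, h⟩⟩))
        have hsimw : s₁.sim k w := by
          refine ⟨?_, ?_, ?_⟩
          · show s₁.notes k = (if k = i then s₁.notes i ∪ e.msg.FI else s₁.notes k)
            rw [if_neg hki]
          · intro f hf hkf
            by_cases hfe : f = e
            · subst hfe
              exact ⟨eM, Finset.mem_insert_self _ _, hsimeM hkf⟩
            · exact ⟨f, Finset.mem_insert_of_mem (Finset.mem_erase.2 ⟨hfe, hf⟩),
                Email.sim_refl' hkf⟩
          · intro f hf hkf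
            rcases Finset.mem_insert.1 hf with rfl | hf'
            · refine ⟨e, heK, hsimeM ?_⟩
              rcases mem_agents.1 hkf with h | h | h
              · exact mem_agents.2 (Or.inl h)
              · exact mem_agents.2 (Or.inr (Or.inl h))
              · exact mem_agents.2 (Or.inr (Or.inr (Finset.mem_of_mem_erase h)))
            · exact ⟨f, Finset.mem_of_mem_erase hf', Email.sim_refl' hkf⟩
        have hmem := (form_iff hlegw he).1
          (hck' w hlegw (Relation.ReflTransGen.tail hsim₁ ⟨k, hkA, hsimw⟩))
        rcases Finset.mem_insert.1 hmem with h | h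
        · have hb' := congrArg Email.bcc h
          rw [heMdef] at hb'
          exact (Finset.mem_erase.1 (hb' ▸ hib)).1 rfl
        · exact (Finset.mem_erase.1 h).1 rfl
    · -- C3
      by_contra hno
      push_neg at hno
      set P : Email Agent Note → Prop :=
        fun f => Valid (Form.imp (.msg f.msg) (.msg e.msg)) with hPdef
      have ha : ∀ f ∈ s.emails, P f → ¬ f.SharedBy A := fun f hf hP hsh => hno f hf hsh hP
      have hb : ∀ f ∈ s.emails, ¬ P f → ∀ (i₂ : Agent) (l : Note) (m : Msg Agent Note)
          (G : Finset Agent), f.msg = Msg.fwd i₂ l m G →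
          ∀ e' ∈ s.emails, e'.msg = m → ¬ P e' := by
        intro f hf hPf i₂ l m G hfm e' he' hm' hPe'
        apply hPf
        intro t ht
        refine sat_imp.2 fun hsat => ?_
        have h1 : Sat t (Form.msg m) :=
          sat_imp.1 (valid_fwd_msg i₂ l m G t ht) (by rwa [hfm] at hsat)
        exact sat_imp.1 (hPe' t ht) (by rwa [hm'])
      obtain ⟨s₁, hleg₁, hsim₁, hmem₁⟩ := removal s hs A hA P ha hb
      have hPe : P e := valid_imp_self e.msg
      have hmem := (form_iff hleg₁ he).1 (hck' s₁ hleg₁ hsim₁)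
      exact ((hmem₁ e).1 hmem).2 hPe
  · rintro ⟨hC1, hC2, hC3⟩
    intro s' hleg' hsim'
    rw [form_iff hleg' he]
    obtain ⟨e₁, he₁, hsh₁, hv₁⟩ := hC3
    obtain ⟨B₁, hB₁, -⟩ := shared_transfer hA hsim' e₁ he₁ hsh₁
    obtain ⟨B₀, hB₀⟩ := sat_msg.1 (sat_imp.1 (hv₁ s' hleg') (sat_msg.2 ⟨B₁, hB₁⟩))
    have hwf' := hleg'.1.1
    have huniq' := hleg'.1.2
    have hbcc : B₀ = e.bcc := by
      ext x
      constructor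
      · intro hx
        have hxSR : x ∉ e.msg.S ∪ e.msg.recip := by
          intro hc
          exact Finset.eq_empty_iff_forall_notMem.1 (hwf' _ hB₀).2 x
            (Finset.mem_inter.2 ⟨hc, hx⟩)
        have hxuniv : x ∈ e.msg.S ∪ e.msg.recip ∪ e.bcc := hC1 ▸ Finset.mem_univ x
        rcases Finset.mem_union.1 hxuniv with h | h
        · exact absurd h hxSR
        · exact h
      · intro hx
        obtain ⟨e₂, he₂, hsh₂, hv₂⟩ := hC2 x hx
        obtain ⟨B₂, hB₂, -⟩ := shared_transfer hA hsim' e₂ he₂ hsh₂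
        obtain ⟨B₃, hB₃, hxB₃⟩ := sat_recv.1 (sat_imp.1 (hv₂ s' hleg') (sat_msg.2 ⟨B₂, hB₂⟩))
        have heq := huniq' _ hB₃ _ hB₀ rfl
        rw [Email.mk.injEq] at heq
        rw [heq.2] at hxB₃
        rcases Finset.mem_union.1 hxB₃ with h | h
        · exact absurd (Finset.mem_inter.2 ⟨h, hx⟩)
            (Finset.eq_empty_iff_forall_notMem.1 he.2 x)
        · exact h
    have : (⟨e.msg, B₀⟩ : Email Agent Note) = e := by rw [hbcc]
    rwa [this] at hB₀
end

section
/- Let s = (E,L) be a legal state, m_B ∈ E an email and C ⊆ B, and suppose that E contains no forward of m by an agent in B \ C, i.e., no email of the form f(i,l.m,G)_D ∈ E with i ∈ B \ C. Then the state s[m_{B↦C}] is legal. -/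
/-- Depth of a message. -/
def Msg.depth {Agent Note : Type} : Msg Agent Note → ℕ
  | .send _ _ _ => 0
  | .fwd _ _ m _ => m.depth + 1

lemma Msg.fwd_ne_self {Agent Note : Type} (i : Agent) (l : Note) (G : Finset Agent)
    (m : Msg Agent Note) : Msg.fwd i l m G ≠ m := by
  intro h
  have := congrArg Msg.depth h
  simp [Msg.depth] at this

/-- shrinking the BCC set of an email `m_B ∈ E` to `C ⊆ B` yields a legal
state, provided no agent in `B \ C` forwards `m` in `E`. -/
theorem shrink_bcc_legal {Agent Note : Type} [DecidableEq Agent] [Fintype Agent]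
    [Nonempty Agent] [DecidableEq Note] (s : EState Agent Note) (hs : s.Legal)
    (e : Email Agent Note) (he : e ∈ s.emails) (C : Finset Agent) (hC : C ⊆ e.bcc)
    (hnofwd : ∀ e' ∈ s.emails, ∀ (i : Agent) (l : Note) (G : Finset Agent),
      e'.msg = Msg.fwd i l e.msg G → i ∉ e.bcc \ C) :
    (s.shrink e C).Legal := by
  obtain ⟨⟨hwf1, hwf2⟩, r, hirr, htrans, hL1, hL2, hL3⟩ := hs
  set eC : Email Agent Note := ⟨e.msg, C⟩ with heCdef
  have heCmsg : eC.msg = e.msg := rfl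
  have huniq : ∀ x ∈ s.emails, x.msg = e.msg → x = e := fun x hx hm => hwf2 x hx e he hm
  have hsetdef : (s.shrink e C).emails = insert eC (s.emails.erase e) := rfl
  have hne : ∀ x ∈ s.emails.erase e, x ≠ eC := by
    intro x hx h
    exact (Finset.ne_of_mem_erase hx)
      (huniq x (Finset.mem_of_mem_erase hx) (by rw [h]))
  set g : Email Agent Note → Email Agent Note := fun x => if x = eC then e else x with hg
  have hgmem : ∀ x ∈ (s.shrink e C).emails, g x ∈ s.emails := by
    intro x hx
    rw [hsetdef, Finset.mem_insert] at hx
    rcases hx with h | h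
    · simpa [hg, h] using he
    · simpa [hg, hne x h] using Finset.mem_of_mem_erase h
  have hgmsg : ∀ x, (g x).msg = x.msg := by
    intro x
    by_cases h : x = eC <;> simp [hg, h, heCmsg]
  have hgeC : g eC = e := by simp [hg]
  have hsub : ∀ j, s.notes j ⊆ (s.shrink e C).notes j := by
    intro j a ha
    simp only [EState.shrink]
    split
    · exact Or.inl ha
    · exact ha
  refine ⟨⟨?_, ?_⟩, fun a b => r (g a) (g b), ?_, ?_, ?_, ?_, ?_⟩
  · -- wellformedness of each email
    intro x hx
    rw [hsetdef, Finset.mem_insert] at hx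
    rcases hx with h | h
    · subst h
      refine ⟨(hwf1 e he).1, ?_⟩
      have h2 := (hwf1 e he).2
      rw [Finset.eq_empty_iff_forall_notMem] at h2 ⊢
      intro a ha
      rw [Finset.mem_inter] at ha
      exact h2 a (Finset.mem_inter.2 ⟨ha.1, hC ha.2⟩)
    · exact hwf1 x (Finset.mem_of_mem_erase h)
  · -- uniqueness per message
    intro x hx y hy hmsg
    rw [hsetdef, Finset.mem_insert] at hx hy
    rcases hx with hx | hx <;> rcases hy with hy | hy
    · rw [hx, hy]
    · exact absurd (huniq y (Finset.mem_of_mem_erase hy) (by rw [← hmsg, hx]))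
        (Finset.ne_of_mem_erase hy)
    · exact absurd (huniq x (Finset.mem_of_mem_erase hx) (by rw [hmsg, hy]))
        (Finset.ne_of_mem_erase hx)
    · exact hwf2 x (Finset.mem_of_mem_erase hx) y (Finset.mem_of_mem_erase hy) hmsg
  · -- irreflexivity
    intro x hx
    exact hirr (g x) (hgmem x hx)
  · -- transitivity
    intro a ha b hb c hc h1 h2
    exact htrans _ (hgmem a ha) _ (hgmem b hb) _ (hgmem c hc) h1 h2
  · -- L1
    intro x hx i l m G hxm
    obtain ⟨e1, he1, he1m, hre1, hi⟩ :=
      hL1 (g x) (hgmem x hx) i l m G ((hgmsg x).trans hxm)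
    by_cases hcase : e1 = e
    · rw [hcase] at he1m hre1 hi
      refine ⟨eC, Finset.mem_insert_self _ _, heCmsg.trans he1m, ?_, ?_⟩
      · show r (g eC) (g x)
        rw [hgeC]; exact hre1
      · rw [Finset.mem_union] at hi ⊢
        rcases hi with hi | hi
        · exact Or.inl hi
        · right
          have hmsgeq : (g x).msg = Msg.fwd i l e.msg G := by
            rw [(hgmsg x).trans hxm, he1m]
          have := hnofwd (g x) (hgmem x hx) i l G hmsgeq
          rw [Finset.mem_sdiff] at this
          by_contra hiC
          exact this ⟨hi, hiC⟩
    · have he1e : e1 ∈ s.emails.erase e := Finset.mem_erase.2 ⟨hcase, he1⟩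
      refine ⟨e1, Finset.mem_insert_of_mem he1e, he1m, ?_, hi⟩
      show r (g e1) (g x)
      simp only [hg, if_neg (hne e1 he1e)]
      exact hre1
  · -- L2
    intro x hx i l G hxm hln
    have hln' : l ∉ s.notes i := fun h => hln (hsub i h)
    obtain ⟨e1, he1, hre1, hi, hl⟩ :=
      hL2 (g x) (hgmem x hx) i l G ((hgmsg x).trans hxm) hln'
    by_cases hcase : e1 = e
    · rw [hcase] at hre1 hi hl
      refine ⟨eC, Finset.mem_insert_self _ _, ?_, ?_, hl⟩
      · show r (g eC) (g x)
        rw [hgeC]; exact hre1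
      · rw [Finset.mem_union] at hi ⊢
        rcases hi with hi | hi
        · exact Or.inl (by exact hi)
        · right
          show i ∈ C
          by_contra hiC
          have hibc : i ∈ e.bcc \ C := Finset.mem_sdiff.2 ⟨hi, hiC⟩
          have : l ∈ (s.shrink e C).notes i := by
            simp only [EState.shrink, if_pos hibc]
            exact Or.inr hl
          exact hln this
    · have he1e : e1 ∈ s.emails.erase e := Finset.mem_erase.2 ⟨hcase, he1⟩
      refine ⟨e1, Finset.mem_insert_of_mem he1e, ?_, hi, hl⟩
      show r (g e1) (g x)
      simp only [hg, if_neg (hne e1 he1e)]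
      exact hre1
  · -- L3
    intro x hx i l m G hxm hln
    have hln' : l ∉ s.notes i := fun h => hln (hsub i h)
    obtain ⟨e1, he1, hre1, hi, hl⟩ :=
      hL3 (g x) (hgmem x hx) i l m G ((hgmsg x).trans hxm) hln'
    by_cases hcase : e1 = e
    · rw [hcase] at hre1 hi hl
      refine ⟨eC, Finset.mem_insert_self _ _, ?_, ?_, hl⟩
      · show r (g eC) (g x)
        rw [hgeC]; exact hre1
      · rw [Finset.mem_union] at hi ⊢
        rcases hi with hi | hi
        · exact Or.inl (by exact hi)
        · right
          show i ∈ C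
          by_contra hiC
          have hibc : i ∈ e.bcc \ C := Finset.mem_sdiff.2 ⟨hi, hiC⟩
          have : l ∈ (s.shrink e C).notes i := by
            simp only [EState.shrink, if_pos hibc]
            exact Or.inr hl
          exact hln this
    · have he1e : e1 ∈ s.emails.erase e := Finset.mem_erase.2 ⟨hcase, he1⟩
      refine ⟨e1, Finset.mem_insert_of_mem he1e, ?_, hi, hl⟩
      show r (g e1) (g x)
      simp only [hg, if_neg (hne e1 he1e)]
      exact hre1
end
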